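/- Corollary: If in a reciprocated two-type network every node has the same out-degree K ≥ 1 (e.g., a disjoint union of cliques all of the same size K+1 with doubled directed edges), then Newman's r computed with all edge weights equal to 1 equals Bergstrom's α. -/

import Mathlib

open Finset

/-- corollary: if every node has the same out-degree K ≥ 1,
then Newman's r computed with all edge weights equal to 1 equals
Bergstrom's α. -/
theorem newman_eq_bergstrom_equal_degree
    {V : Type*} [Fintype V] [DecidableEq V]
    (pos : V → Bool) (π ν : V → ℕ)
    (K : ℕ) (hK : 1 ≤ K)
    (hdeg : ∀ s, π s + ν s = K)
    (hNp : (univ.filter (fun s => pos s = true)).Nonempty)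
    (hNm : (univ.filter (fun s => pos s = false)).Nonempty)
    (P M Q : ℝ)
    (hP : P = ∑ s ∈ univ.filter (fun s => pos s = true), (π s : ℝ))
    (hM : M = ∑ s ∈ univ.filter (fun s => pos s = true), (ν s : ℝ))
    (hQ : Q = ∑ s ∈ univ.filter (fun s => pos s = false), (ν s : ℝ))
    -- reciprocity: the count of −→+ edges equals that of +→− edges
    (hrec : ∑ s ∈ univ.filter (fun s => pos s = false), (π s : ℝ) = M)
    (T : ℝ) (hT : T = P + 2 * M + Q) (hTpos : 0 < T)
    (epp emm epm ap am : ℝ)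
    (hepp : epp = P / T) (hemm : emm = Q / T) (hepm : epm = M / T)
    (hap : ap = epp + epm) (ham : am = epm + emm)
    (hden : 0 < 1 - ap ^ 2 - am ^ 2)
    (r : ℝ) (hr : r = (epp + emm - ap ^ 2 - am ^ 2) / (1 - ap ^ 2 - am ^ 2))
    (α : ℝ)
    (hα : α =
      (1 / ((univ.filter (fun s => pos s = true)).card : ℝ)) *
        ∑ s ∈ univ.filter (fun s => pos s = true), (π s : ℝ) / (K : ℝ) -
      (1 / ((univ.filter (fun s => pos s = false)).card : ℝ)) *
        ∑ s ∈ univ.filter (fun s => pos s = false), (π s : ℝ) / (K : ℝ)) :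
    r = α := by
  set Np := univ.filter (fun s => pos s = true) with hNpdef
  set Nm := univ.filter (fun s => pos s = false) with hNmdef
  have haN : 0 < Np.card := Finset.card_pos.mpr hNp
  have hbN : 0 < Nm.card := Finset.card_pos.mpr hNm
  have ha : (0:ℝ) < Np.card := by exact_mod_cast haN
  have hb : (0:ℝ) < Nm.card := by exact_mod_cast hbN
  have hK' : (0:ℝ) < (K:ℝ) := by exact_mod_cast hK
  set a : ℝ := (Np.card : ℝ)
  set b : ℝ := (Nm.card : ℝ)
  have hPM : P + M = (K:ℝ) * a := by
    rw [hP, hM, ← Finset.sum_add_distrib]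
    have : ∀ s ∈ Np, ((π s : ℝ) + (ν s : ℝ)) = (K:ℝ) := by
      intro s _
      exact_mod_cast congrArg (Nat.cast (R := ℝ)) (hdeg s)
    rw [Finset.sum_congr rfl this, Finset.sum_const, nsmul_eq_mul, mul_comm]
  have hMQ : M + Q = (K:ℝ) * b := by
    rw [← hrec, hQ, ← Finset.sum_add_distrib]
    have : ∀ s ∈ Nm, ((π s : ℝ) + (ν s : ℝ)) = (K:ℝ) := by
      intro s _
      exact_mod_cast congrArg (Nat.cast (R := ℝ)) (hdeg s)
    rw [Finset.sum_congr rfl this, Finset.sum_const, nsmul_eq_mul, mul_comm]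
  have hT' : T = (K:ℝ) * (a + b) := by rw [hT]; linarith
  have hab : (0:ℝ) < a + b := by linarith
  have hap' : ap = a / (a + b) := by
    rw [hap, hepp, hepm, ← add_div, hPM, hT']
    exact mul_div_mul_left _ _ (ne_of_gt hK')
  have ham' : am = b / (a + b) := by
    rw [ham, hepm, hemm, ← add_div, hMQ, hT']
    exact mul_div_mul_left _ _ (ne_of_gt hK')
  have hsum1 : ∑ s ∈ Np, (π s : ℝ) / (K:ℝ) = P / K := by
    rw [← Finset.sum_div, ← hP]
  have hsum2 : ∑ s ∈ Nm, (π s : ℝ) / (K:ℝ) = M / K := by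
    rw [← Finset.sum_div, hrec]
  have hQ' : Q = (K:ℝ) * b - (K:ℝ) * a + P := by linarith
  have hM' : M = (K:ℝ) * a - P := by linarith
  rw [hr, hα, hsum1, hsum2, div_eq_iff (ne_of_gt hden), hepp, hemm, hap', ham',
    hT', hQ', hM']
  field_simp
  ring
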